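/- arXiv:2202.09667 — 5 statements merged into one kernel-verified Lean document; each statement's English description precedes it below -/
import Mathlib

section
/- The function φ is concave on (0, ∞). Moreover, if μ is not a Dirac measure (i.e., there is no c ∈ [0,1] with μ({c}) = 1), then φ is strictly concave on (0, ∞). -/
open MeasureTheory Real Set

/-- `W_j(α) = ∫ r^j exp(-r/α) dμ(r)`. -/
noncomputable def Wj (μ : Measure ℝ) (j : ℕ) (α : ℝ) : ℝ :=
  ∫ r, r ^ j * Real.exp (-r / α) ∂μ

/-- `φ(α) = -α log W_0(α) - α δ`. -/
noncomputable def phi (μ : Measure ℝ) (δ : ℝ) (α : ℝ) : ℝ :=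
  -α * Real.log (Wj μ 0 α) - α * δ

section Aux

variable {μ : Measure ℝ} [IsProbabilityMeasure μ]

lemma Wj_zero_eq (μ : Measure ℝ) (α : ℝ) :
    Wj μ 0 α = ∫ r, Real.exp (-r / α) ∂μ := by
  simp [Wj]

lemma integrable_exp_div (hsupp : ∀ᵐ r ∂μ, r ∈ Set.Icc (0 : ℝ) 1) {α : ℝ} (hα : 0 < α) :
    Integrable (fun r => Real.exp (-r / α)) μ := by
  refine Integrable.mono' (integrable_const 1)
    (Continuous.aestronglyMeasurable (by continuity)) ?_
  filter_upwards [hsupp] with r hr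
  rw [Real.norm_eq_abs, abs_of_pos (Real.exp_pos _)]
  refine Real.exp_le_one_iff.mpr ?_
  exact div_nonpos_of_nonpos_of_nonneg (by linarith [hr.1]) hα.le

lemma W_pos (hsupp : ∀ᵐ r ∂μ, r ∈ Set.Icc (0 : ℝ) 1) {α : ℝ} (hα : 0 < α) :
    0 < ∫ r, Real.exp (-r / α) ∂μ := by
  have h1 : Real.exp (-1 / α) ≤ ∫ r, Real.exp (-r / α) ∂μ := by
    have := integral_mono_ae (integrable_const (Real.exp (-1 / α)))
      (integrable_exp_div hsupp hα) ?_
    · simpa using this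
    · filter_upwards [hsupp] with r hr
      refine Real.exp_le_exp.mpr ?_
      gcongr
      linarith [hr.2]
  linarith [Real.exp_pos (-1 / α)]

/-- strict two-point AM-GM -/
lemma geom_lt_arith {w p q : ℝ} (hw0 : 0 < w) (hw1 : w < 1) (hp : 0 < p) (hq : 0 < q)
    (hpq : p ≠ q) : p ^ w * q ^ (1 - w) < w * p + (1 - w) * q := by
  have h := strictConcaveOn_log_Ioi.2 (mem_Ioi.mpr hp) (mem_Ioi.mpr hq) hpq hw0
    (by linarith : (0:ℝ) < 1 - w) (by ring)
  have hpos : 0 < w * p + (1 - w) * q := by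
    have : 0 < 1 - w := by linarith
    positivity
  have h1 : p ^ w * q ^ (1 - w) = Real.exp (w * Real.log p + (1 - w) * Real.log q) := by
    rw [Real.exp_add, Real.rpow_def_of_pos hp, Real.rpow_def_of_pos hq]
    ring_nf
  rw [h1]
  calc Real.exp (w * Real.log p + (1 - w) * Real.log q)
      < Real.exp (Real.log (w * p + (1 - w) * q)) := by
        refine Real.exp_lt_exp.mpr ?_
        simpa [smul_eq_mul] using h
    _ = w * p + (1 - w) * q := Real.exp_log hpos


lemma key_ineq (μ : Measure ℝ) [IsProbabilityMeasure μ]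
    (hsupp : ∀ᵐ r ∂μ, r ∈ Set.Icc (0 : ℝ) 1)
    {x y s t : ℝ} (hx : 0 < x) (hy : 0 < y) (hs : 0 < s) (ht : 0 < t) (hst : s + t = 1) :
    (s * x + t * y) * Real.log (Wj μ 0 (s * x + t * y)) ≤
      s * x * Real.log (Wj μ 0 x) + t * y * Real.log (Wj μ 0 y) ∧
    ((¬ ∃ c ∈ Set.Icc (0 : ℝ) 1, μ {c} = 1) → x ≠ y →
      (s * x + t * y) * Real.log (Wj μ 0 (s * x + t * y)) <
        s * x * Real.log (Wj μ 0 x) + t * y * Real.log (Wj μ 0 y)) := by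
  simp only [Wj_zero_eq]
  set α : ℝ := s * x + t * y with hαdef
  have hα : 0 < α := by positivity
  set l : ℝ := s * x / α with hldef
  have hl0 : 0 < l := by positivity
  have hl1 : l < 1 := by
    rw [hldef, div_lt_one hα, hαdef]
    nlinarith
  have h1l : 1 - l = t * y / α := by
    rw [hldef]; field_simp; rw [hαdef]; ring
  set A : ℝ := ∫ r, Real.exp (-r / x) ∂μ with hAdef
  set B : ℝ := ∫ r, Real.exp (-r / y) ∂μ with hBdef
  set W : ℝ := ∫ r, Real.exp (-r / α) ∂μ with hWdef
  have hA : 0 < A := W_pos hsupp hx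
  have hB : 0 < B := W_pos hsupp hy
  have hW : 0 < W := W_pos hsupp hα
  set K : ℝ := A ^ l * B ^ (1 - l) with hKdef
  have hK : 0 < K := by
    have := Real.rpow_pos_of_pos hA l
    have := Real.rpow_pos_of_pos hB (1 - l)
    positivity
  -- pointwise identity
  have hid : ∀ r : ℝ, Real.exp (-r / α) =
      K * ((Real.exp (-r / x) / A) ^ l * (Real.exp (-r / y) / B) ^ (1 - l)) := by
    intro r
    have h1 : (Real.exp (-r / x) / A) ^ l = Real.exp (-r / x) ^ l / A ^ l :=
      Real.div_rpow (Real.exp_pos _).le hA.le l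
    have h2 : (Real.exp (-r / y) / B) ^ (1 - l) = Real.exp (-r / y) ^ (1 - l) / B ^ (1 - l) :=
      Real.div_rpow (Real.exp_pos _).le hB.le (1 - l)
    rw [h1, h2, hKdef]
    have hAl : (0:ℝ) < A ^ l := Real.rpow_pos_of_pos hA l
    have hBl : (0:ℝ) < B ^ (1 - l) := Real.rpow_pos_of_pos hB (1 - l)
    rw [← Real.exp_mul, ← Real.exp_mul]
    have h3 : Real.exp (-r / x * l) * Real.exp (-r / y * (1 - l)) =
        Real.exp (-r / x * l + -r / y * (1 - l)) := (Real.exp_add _ _).symm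
    have e1 : -r / x * l = -(r * s) / α := by
      rw [hldef]; field_simp
    have e2 : -r / y * (1 - l) = -(r * t) / α := by
      rw [h1l]; field_simp
    have h4 : -r / x * l + -r / y * (1 - l) = -r / α := by
      rw [e1, e2, ← add_div]
      congr 1
      linear_combination (-r) * hst
    have h5 : A ^ l * B ^ (1 - l) *
        (Real.exp (-r / x * l) / A ^ l * (Real.exp (-r / y * (1 - l)) / B ^ (1 - l))) =
        Real.exp (-r / x * l) * Real.exp (-r / y * (1 - l)) := by
      field_simp
    rw [h5, h3, h4]
  -- the comparison function
  set H : ℝ → ℝ := fun r => K * l / A * Real.exp (-r / x) + K * (1 - l) / B * Real.exp (-r / y)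
    with hHdef
  have hpt : ∀ r : ℝ, Real.exp (-r / α) ≤ H r := by
    intro r
    rw [hid r, hHdef]
    have hgm := Real.geom_mean_le_arith_mean2_weighted hl0.le (by linarith : (0:ℝ) ≤ 1 - l)
      (by positivity : (0:ℝ) ≤ Real.exp (-r / x) / A)
      (by positivity : (0:ℝ) ≤ Real.exp (-r / y) / B) (by ring)
    have := mul_le_mul_of_nonneg_left hgm hK.le
    calc K * ((Real.exp (-r / x) / A) ^ l * (Real.exp (-r / y) / B) ^ (1 - l))
        ≤ K * (l * (Real.exp (-r / x) / A) + (1 - l) * (Real.exp (-r / y) / B)) := this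
      _ = K * l / A * Real.exp (-r / x) + K * (1 - l) / B * Real.exp (-r / y) := by
          field_simp
  have hfi := integrable_exp_div hsupp hx
  have hgi := integrable_exp_div hsupp hy
  have hWi := integrable_exp_div hsupp hα
  have hHi : Integrable H μ := by
    rw [hHdef]
    exact (hfi.const_mul _).add (hgi.const_mul _)
  have hintH : ∫ r, H r ∂μ = K := by
    rw [hHdef, integral_add (hfi.const_mul _) (hgi.const_mul _), integral_const_mul,
      integral_const_mul, ← hAdef, ← hBdef]
    field_simp
    ring
  have hWK : W ≤ K := by
    have := integral_mono hWi hHi hpt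
    rwa [hintH] at this
  have hlogK : Real.log K = l * Real.log A + (1 - l) * Real.log B := by
    rw [hKdef, Real.log_mul (Real.rpow_pos_of_pos hA l).ne' (Real.rpow_pos_of_pos hB _).ne',
      Real.log_rpow hA, Real.log_rpow hB]
  have hαl : α * l = s * x := by
    rw [hldef]; field_simp
  have hα1l : α * (1 - l) = t * y := by
    rw [h1l]; field_simp
  constructor
  · have h5 : Real.log W ≤ Real.log K := Real.log_le_log hW hWK
    have h6 : α * Real.log W ≤ α * Real.log K := by
      exact mul_le_mul_of_nonneg_left h5 hα.le
    calc α * Real.log W ≤ α * Real.log K := h6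
      _ = α * l * Real.log A + α * (1 - l) * Real.log B := by rw [hlogK]; ring
      _ = s * x * Real.log A + t * y * Real.log B := by rw [hαl, hα1l]
  · intro hdirac hxy
    -- strict inequality
    have hxyinv : 1 / y - 1 / x ≠ 0 := by
      intro h
      apply hxy
      field_simp at h
      linarith
    set c : ℝ := Real.log (A / B) / (1 / y - 1 / x) with hcdef
    have hne : ¬ ((fun r => Real.exp (-r / α)) =ᵐ[μ] H) := by
      intro heq
      have hc : ∀ᵐ r ∂μ, r = c := by
        filter_upwards [heq] with r hr
        have hfg : Real.exp (-r / x) / A = Real.exp (-r / y) / B := by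
          by_contra hfg
          have hgm := geom_lt_arith hl0 hl1
            (by positivity : (0:ℝ) < Real.exp (-r / x) / A)
            (by positivity : (0:ℝ) < Real.exp (-r / y) / B) hfg
          have h7 : Real.exp (-r / α) < H r := by
            rw [hid r, hHdef]
            calc K * ((Real.exp (-r / x) / A) ^ l * (Real.exp (-r / y) / B) ^ (1 - l))
                < K * (l * (Real.exp (-r / x) / A) + (1 - l) * (Real.exp (-r / y) / B)) :=
                  (mul_lt_mul_iff_right₀ hK).mpr hgm
              _ = K * l / A * Real.exp (-r / x) + K * (1 - l) / B * Real.exp (-r / y) := by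
                  field_simp
          rw [hr] at h7
          exact lt_irrefl _ h7
        -- from hfg derive r = c
        have h8 : Real.exp (-r / x) / Real.exp (-r / y) = A / B := by
          rw [div_eq_div_iff hA.ne' hB.ne'] at hfg
          rw [div_eq_div_iff (Real.exp_pos _).ne' hB.ne']
          linarith
        rw [← Real.exp_sub] at h8
        have h9 := congrArg Real.log h8
        rw [Real.log_exp] at h9
        have h10 : r * (1 / y - 1 / x) = Real.log (A / B) := by
          rw [← h9]; field_simp; ring
        rw [hcdef, ← h10, mul_div_assoc, div_self hxyinv, mul_one]
      have hmc : μ {c} = 1 := by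
        rw [← prob_compl_eq_zero_iff (measurableSet_singleton c)]
        have : {r : ℝ | ¬ r = c} = ({c} : Set ℝ)ᶜ := by
          ext r; simp
        rw [ae_iff] at hc
        rwa [this] at hc
      haveI : (ae μ).NeBot := ae_neBot.mpr (IsProbabilityMeasure.ne_zero μ)
      obtain ⟨r, hr1, hr2⟩ := (hc.and hsupp).exists
      exact hdirac ⟨c, hr1 ▸ hr2, hmc⟩
    have hWK' : W < K := by
      have hnn : 0 ≤ᵐ[μ] fun r => H r - Real.exp (-r / α) :=
        Filter.Eventually.of_forall fun r => sub_nonneg.mpr (hpt r)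
      have hsubi : Integrable (fun r => H r - Real.exp (-r / α)) μ := hHi.sub hWi
      have hne0 : ∫ r, (H r - Real.exp (-r / α)) ∂μ ≠ 0 := by
        intro h0
        have := (integral_eq_zero_iff_of_nonneg_ae hnn hsubi).mp h0
        apply hne
        filter_upwards [this] with r hr
        have : H r - Real.exp (-r / α) = 0 := hr
        linarith
      have hge : 0 ≤ ∫ r, (H r - Real.exp (-r / α)) ∂μ := integral_nonneg_of_ae hnn
      have hpos : 0 < ∫ r, (H r - Real.exp (-r / α)) ∂μ := lt_of_le_of_ne hge (Ne.symm hne0)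
      rw [integral_sub hHi hWi, hintH] at hpos
      linarith
    have h5 : Real.log W < Real.log K := Real.log_lt_log hW hWK'
    have h6 : α * Real.log W < α * Real.log K := by
      exact (mul_lt_mul_iff_right₀ hα).mpr h5
    calc α * Real.log W < α * Real.log K := h6
      _ = α * l * Real.log A + α * (1 - l) * Real.log B := by rw [hlogK]; ring
      _ = s * x * Real.log A + t * y * Real.log B := by rw [hαl, hα1l]

end Aux

/-- `φ` is concave on `(0, ∞)`, and strictly concave if `μ` is not a Dirac measure. -/
theorem phi_concaveOn_and_strictConcaveOn
    (μ : Measure ℝ) [IsProbabilityMeasure μ]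
    (hsupp : ∀ᵐ r ∂μ, r ∈ Set.Icc (0 : ℝ) 1)
    (δ : ℝ) (hδ : 0 < δ) :
    ConcaveOn ℝ (Set.Ioi (0 : ℝ)) (phi μ δ) ∧
      ((¬ ∃ c ∈ Set.Icc (0 : ℝ) 1, μ {c} = 1) →
        StrictConcaveOn ℝ (Set.Ioi (0 : ℝ)) (phi μ δ)) := by
  constructor
  · refine ⟨convex_Ioi 0, ?_⟩
    intro p hp q hq s t hs ht hst
    rcases eq_or_lt_of_le hs with hs0 | hs0
    · simp [← hs0, show t = 1 by linarith]
    rcases eq_or_lt_of_le ht with ht0 | ht0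
    · simp [← ht0, show s = 1 by linarith]
    have hk := (key_ineq μ hsupp (mem_Ioi.mp hp) (mem_Ioi.mp hq) hs0 ht0 hst).1
    simp only [smul_eq_mul, phi]
    nlinarith [hk]
  · intro hnd
    refine ⟨convex_Ioi 0, ?_⟩
    intro p hp q hq hpq s t hs ht hst
    have hk := (key_ineq μ hsupp (mem_Ioi.mp hp) (mem_Ioi.mp hq) hs ht hst).2 hnd hpq
    simp only [smul_eq_mul, phi]
    nlinarith [hk]
end

section
/- Suppose S_w < 1. Then δ < −log S_w if and only if the set {φ̂(α) : α > 0} is not bounded above (i.e., sup_{α>0} φ̂(α) = +∞). -/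
open Finset

/-- Weighted DROPE objective `φ̂(α) = -α log((1/N) ∑ᵢ wᵢ exp(-rᵢ/α)) - αδ`. -/
noncomputable def phiHat (N : ℕ) (r w : Fin N → ℝ) (δ : ℝ) (α : ℝ) : ℝ :=
  -α * Real.log ((1 / (N : ℝ)) * ∑ i, w i * Real.exp (-r i / α)) - α * δ

/-- Weight-mean `S_w = (1/N) ∑ᵢ wᵢ`. -/
noncomputable def Sw (N : ℕ) (w : Fin N → ℝ) : ℝ := (1 / (N : ℝ)) * ∑ i, w i

/-- Minimum reward `m = minᵢ rᵢ`. -/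
noncomputable def mMin (N : ℕ) (r : Fin N → ℝ) : ℝ := ⨅ i, r i

/-- Min-reward weight-mean `S_w^m = (1/N) ∑_{i : rᵢ = m} wᵢ`. -/
noncomputable def Swm (N : ℕ) (r w : Fin N → ℝ) : ℝ :=
  (1 / (N : ℝ)) * ∑ i ∈ Finset.univ.filter (fun i => r i = mMin N r), w i

/-- If `S_w < 1`, then `δ < -log S_w` iff `φ̂` is unbounded above on `(0, ∞)`. -/
theorem phiHat_unbounded_iff
    (N : ℕ) (hN : 0 < N) (r w : Fin N → ℝ)
    (hr : ∀ i, r i ∈ Set.Icc (0 : ℝ) 1) (hw : ∀ i, 0 ≤ w i)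
    (δ : ℝ) (hδ : 0 < δ) (hSwpos : 0 < Sw N w) (hSw : Sw N w < 1) :
    δ < -Real.log (Sw N w) ↔ ¬ BddAbove (phiHat N r w δ '' Set.Ioi 0) := by
  have hNpos : (0:ℝ) < N := Nat.cast_pos.2 hN
  have key : ∀ α : ℝ, 0 < α →
      α * (-Real.log (Sw N w) - δ) ≤ phiHat N r w δ α ∧
      phiHat N r w δ α ≤ α * (-Real.log (Sw N w) - δ) + 1 := by
    intro α hα
    set A := (1 / (N : ℝ)) * ∑ i, w i * Real.exp (-r i / α) with hA
    have hlow : Sw N w * Real.exp (-1/α) ≤ A := by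
      rw [Sw, mul_assoc, Finset.sum_mul, hA]
      refine mul_le_mul_of_nonneg_left ?_ (by positivity)
      refine Finset.sum_le_sum fun i _ => mul_le_mul_of_nonneg_left ?_ (hw i)
      refine Real.exp_le_exp.2 ?_
      rw [neg_div, neg_div, neg_le_neg_iff]
      exact (div_le_div_iff_of_pos_right hα).2 (hr i).2
    have hhigh : A ≤ Sw N w := by
      rw [hA, Sw]
      refine mul_le_mul_of_nonneg_left ?_ (by positivity)
      refine Finset.sum_le_sum fun i _ => ?_
      nth_rewrite 2 [show w i = w i * 1 by ring]
      refine mul_le_mul_of_nonneg_left ?_ (hw i)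
      refine Real.exp_le_one_iff.2 ?_
      rw [neg_div, neg_nonpos]
      exact div_nonneg (hr i).1 hα.le
    have hApos : 0 < A := lt_of_lt_of_le (by positivity) hlow
    have hphi : phiHat N r w δ α = -α * Real.log A - α * δ := by
      simp only [phiHat, hA]
    have hlogle : Real.log A ≤ Real.log (Sw N w) := Real.log_le_log hApos hhigh
    have hlogge : Real.log (Sw N w) + (-1/α) ≤ Real.log A := by
      have h := Real.log_le_log (by positivity) hlow
      rwa [Real.log_mul hSwpos.ne' (Real.exp_ne_zero _), Real.log_exp] at h
    constructor
    · have h1 : -α * Real.log (Sw N w) ≤ -α * Real.log A :=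
        mul_le_mul_of_nonpos_left hlogle (by linarith)
      have h2 : α * (-Real.log (Sw N w) - δ) = -α * Real.log (Sw N w) - α * δ := by
        ring
      rw [hphi]; linarith
    · have h1 : -α * Real.log A ≤ -α * (Real.log (Sw N w) + (-1/α)) :=
        mul_le_mul_of_nonpos_left hlogge (by linarith)
      have hinv : α * (1/α) = 1 := by field_simp
      have h3 : -α * (Real.log (Sw N w) + (-1/α))
          = -α * Real.log (Sw N w) + α * (1/α) := by ring
      have h4 : α * (-Real.log (Sw N w) - δ) + 1
          = -α * Real.log (Sw N w) + α * (1/α) - α * δ + (1 - α * (1/α)) := by ring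
      rw [hphi]; linarith
  constructor
  · intro h hbdd
    obtain ⟨b, hb⟩ := hbdd
    set c := -Real.log (Sw N w) - δ with hc
    have hcpos : 0 < c := by rw [hc]; linarith
    set α := max 1 ((b+1)/c) with hαdef
    have hαpos : 0 < α := lt_of_lt_of_le one_pos (le_max_left _ _)
    have h1 : b + 1 ≤ α * c := by
      calc b + 1 = ((b+1)/c) * c := by field_simp
        _ ≤ α * c := mul_le_mul_of_nonneg_right (le_max_right _ _) hcpos.le
    have h2 := (key α hαpos).1
    have h3 : phiHat N r w δ α ≤ b := hb ⟨α, Set.mem_Ioi.2 hαpos, rfl⟩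
    linarith
  · intro h
    by_contra h'
    push_neg at h'
    apply h
    refine ⟨1, ?_⟩
    rintro x ⟨α, hα, rfl⟩
    have hαpos : 0 < α := Set.mem_Ioi.1 hα
    have h2 := (key α hαpos).2
    have hnp : α * (-Real.log (Sw N w) - δ) ≤ α * 0 :=
      mul_le_mul_of_nonneg_left (by linarith) hαpos.le
    rw [mul_zero] at hnp
    linarith
end

section
/- Suppose 0 < S_w^m < 1. (a) If −log S_w^m < δ, then φ̂(α) < m for every α > 0, and sup_{α>0} φ̂(α) = m (the supremum is not attained at any α > 0). (b) If δ < −log S_w^m, then there exists α > 0 with φ̂(α) > m. -/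
open Finset

open Filter Topology in
/-- Suppose `0 < S_w^m < 1`.
(a) If `-log S_w^m < δ`, then `φ̂(α) < m` for all `α > 0` and `sup_{α>0} φ̂(α) = m`
(the supremum is not attained).
(b) If `δ < -log S_w^m`, then there is `α > 0` with `φ̂(α) > m`. -/
theorem phiHat_sup_min_reward
    (N : ℕ) (hN : 0 < N) (r w : Fin N → ℝ)
    (hr : ∀ i, r i ∈ Set.Icc (0 : ℝ) 1) (hw : ∀ i, 0 ≤ w i)
    (δ : ℝ) (hδ : 0 < δ) (hSwm : 0 < Swm N r w) (hSwm1 : Swm N r w < 1) :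
    ((-Real.log (Swm N r w) < δ →
        (∀ α > (0 : ℝ), phiHat N r w δ α < mMin N r) ∧
          IsLUB (phiHat N r w δ '' Set.Ioi 0) (mMin N r)) ∧
      (δ < -Real.log (Swm N r w) →
        ∃ α > (0 : ℝ), mMin N r < phiHat N r w δ α)) := by
  haveI : Nonempty (Fin N) := ⟨⟨0, hN⟩⟩
  set m := mMin N r with hm_def
  have hNpos : (0:ℝ) < 1 / (N : ℝ) := by positivity
  have hm_le : ∀ i, m ≤ r i := fun i =>
    ciInf_le (Set.Finite.bddBelow (Set.finite_range r)) i
  set g : ℝ → ℝ := fun α => (1 / (N : ℝ)) * ∑ i, w i * Real.exp ((m - r i) / α) with hg_def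
  -- lower bound : Swm ≤ g α for all α
  have hg_lower : ∀ α : ℝ, Swm N r w ≤ g α := by
    intro α
    rw [Swm, hg_def]
    refine mul_le_mul_of_nonneg_left ?_ hNpos.le
    have : ∑ i ∈ Finset.univ.filter (fun i => r i = m), w i
        = ∑ i ∈ Finset.univ.filter (fun i => r i = m), w i * Real.exp ((m - r i) / α) := by
      refine Finset.sum_congr rfl fun i hi => ?_
      rw [Finset.mem_filter] at hi
      rw [hi.2]
      simp
    rw [this]
    exact Finset.sum_le_sum_of_subset_of_nonneg (Finset.filter_subset _ _)
      (fun i _ _ => mul_nonneg (hw i) (Real.exp_nonneg _))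
  have hg_pos : ∀ α : ℝ, 0 < g α := fun α => lt_of_lt_of_le hSwm (hg_lower α)
  -- upper bound for α > 0
  have hg_upper : ∀ α : ℝ, 0 < α → g α ≤ Sw N w := by
    intro α hα
    rw [hg_def, Sw]
    refine mul_le_mul_of_nonneg_left ?_ hNpos.le
    refine Finset.sum_le_sum fun i _ => ?_
    have hexp : Real.exp ((m - r i) / α) ≤ 1 := by
      rw [Real.exp_le_one_iff]
      exact div_nonpos_of_nonpos_of_nonneg (by linarith [hm_le i]) hα.le
    calc w i * Real.exp ((m - r i) / α) ≤ w i * 1 :=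
          mul_le_mul_of_nonneg_left hexp (hw i)
      _ = w i := mul_one _
  -- key identity
  have hphi : ∀ α : ℝ, 0 < α →
      phiHat N r w δ α = m - α * (Real.log (g α) + δ) := by
    intro α hα
    have hsum : (1 / (N : ℝ)) * ∑ i, w i * Real.exp (-r i / α)
        = Real.exp (-m / α) * g α := by
      have hsum' : ∑ i, w i * Real.exp (-r i / α)
          = ∑ i, Real.exp (-m / α) * (w i * Real.exp ((m - r i) / α)) := by
        refine Finset.sum_congr rfl fun i _ => ?_
        have hex : Real.exp (-m / α) * Real.exp ((m - r i) / α)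
            = Real.exp (-r i / α) := by
          rw [← Real.exp_add, ← add_div]
          congr 1
          ring
        rw [← hex]
        ring
      rw [hg_def, hsum', ← Finset.mul_sum]
      ring
    rw [phiHat, hsum, Real.log_mul (Real.exp_ne_zero _) (hg_pos α).ne',
      Real.log_exp]
    field_simp
    ring
  -- limit of g at 0⁺
  have hg_tendsto : Tendsto g (𝓝[>] (0:ℝ)) (𝓝 (Swm N r w)) := by
    have hterm : ∀ i : Fin N, Tendsto (fun α => w i * Real.exp ((m - r i) / α))
        (𝓝[>] (0:ℝ)) (𝓝 (if r i = m then w i else 0)) := by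
      intro i
      by_cases hi : r i = m
      · simp only [hi, if_pos, sub_self, zero_div, Real.exp_zero, mul_one]
        exact tendsto_const_nhds
      · simp only [hi, if_neg, not_false_iff]
        have hlt : m < r i := lt_of_le_of_ne (hm_le i) fun h => hi h.symm
        have h1 : Tendsto (fun α : ℝ => (r i - m) * α⁻¹) (𝓝[>] (0:ℝ)) atTop :=
          Tendsto.const_mul_atTop (by linarith) tendsto_inv_nhdsGT_zero
        have h2 : Tendsto (fun α : ℝ => (m - r i) / α) (𝓝[>] (0:ℝ)) atBot := by
          have := tendsto_neg_atTop_atBot.comp h1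
          refine this.congr fun α => ?_
          simp [div_eq_mul_inv]; ring
        have h3 : Tendsto (fun α : ℝ => Real.exp ((m - r i) / α)) (𝓝[>] (0:ℝ)) (𝓝 0) :=
          Real.tendsto_exp_atBot.comp h2
        simpa using (tendsto_const_nhds.mul h3 :
          Tendsto (fun α => w i * Real.exp ((m - r i) / α)) (𝓝[>] (0:ℝ)) (𝓝 (w i * 0)))
    have hsum : Tendsto (fun α => ∑ i, w i * Real.exp ((m - r i) / α))
        (𝓝[>] (0:ℝ)) (𝓝 (∑ i, if r i = m then w i else 0)) :=
      tendsto_finset_sum _ fun i _ => hterm i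
    have heq : Swm N r w = (1 / (N : ℝ)) * ∑ i, if r i = m then w i else 0 := by
      rw [Swm, Finset.sum_filter]
    rw [heq]
    exact tendsto_const_nhds.mul hsum
  -- limit of φ at 0⁺
  have hphi_tendsto : Tendsto (phiHat N r w δ) (𝓝[>] (0:ℝ)) (𝓝 m) := by
    have hlog : Tendsto (fun α => Real.log (g α) + δ) (𝓝[>] (0:ℝ))
        (𝓝 (Real.log (Swm N r w) + δ)) :=
      ((Real.continuousAt_log hSwm.ne').tendsto.comp hg_tendsto).add tendsto_const_nhds
    have hα : Tendsto (fun α : ℝ => α) (𝓝[>] (0:ℝ)) (𝓝 0) :=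
      tendsto_id.mono_right nhdsWithin_le_nhds
    have h : Tendsto (fun α => m - α * (Real.log (g α) + δ)) (𝓝[>] (0:ℝ)) (𝓝 m) := by
      have h0 : Tendsto (fun α : ℝ => m - α * (Real.log (g α) + δ)) (𝓝[>] (0:ℝ))
          (𝓝 (m - 0 * (Real.log (Swm N r w) + δ))) :=
        (tendsto_const_nhds (x := m)).sub (hα.mul hlog)
      simpa using h0
    refine h.congr' ?_
    filter_upwards [self_mem_nhdsWithin] with α (hα : (0:ℝ) < α)
    exact (hphi α hα).symm
  constructor
  · intro hcase
    have hkey : ∀ α : ℝ, 0 < α → phiHat N r w δ α < m := by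
      intro α hα
      rw [hphi α hα]
      have hlog_ge : Real.log (Swm N r w) ≤ Real.log (g α) :=
        Real.log_le_log hSwm (hg_lower α)
      have : 0 < Real.log (g α) + δ := by linarith
      nlinarith
    refine ⟨hkey, ?_, ?_⟩
    · rintro x ⟨α, hα, rfl⟩
      exact (hkey α hα).le
    · intro b hb
      refine le_of_tendsto hphi_tendsto ?_
      filter_upwards [self_mem_nhdsWithin] with α (hα : (0:ℝ) < α)
      exact hb ⟨α, hα, rfl⟩
  · intro hcase
    have hlog : Tendsto (fun α => Real.log (g α) + δ) (𝓝[>] (0:ℝ))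
        (𝓝 (Real.log (Swm N r w) + δ)) :=
      ((Real.continuousAt_log hSwm.ne').tendsto.comp hg_tendsto).add tendsto_const_nhds
    have hneg : Real.log (Swm N r w) + δ < 0 := by linarith
    have hev : ∀ᶠ α in 𝓝[>] (0:ℝ), Real.log (g α) + δ < 0 :=
      hlog.eventually (Filter.Tendsto.eventually_lt_const hneg tendsto_id)
    have := (hev.and self_mem_nhdsWithin).exists
    obtain ⟨α, h1, (h2 : (0:ℝ) < α)⟩ := this
    refine ⟨α, h2, ?_⟩
    rw [hphi α h2]
    nlinarith
end

section
/- Define E(α) := −log((1/N) ∑_{i=1}^N w_i exp(−r_i/α)) − (∑_{i=1}^N w_i (r_i/α) exp(−r_i/α)) / (∑_{i=1}^N w_i exp(−r_i/α)) for α > 0. If S_w^m > 0, then E(α) tends to −log S_w^m as α → 0⁺. -/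
open Finset

/-- If `S_w^m > 0`, then the quantity `E(α) = -log((1/N) ∑ᵢ wᵢ exp(-rᵢ/α)) -
(∑ᵢ wᵢ (rᵢ/α) exp(-rᵢ/α)) / (∑ᵢ wᵢ exp(-rᵢ/α))` tends to `-log S_w^m` as `α → 0⁺`. -/
theorem E_tendsto_zero_right
    (N : ℕ) (hN : 0 < N) (r w : Fin N → ℝ)
    (hr : ∀ i, r i ∈ Set.Icc (0 : ℝ) 1) (hw : ∀ i, 0 ≤ w i)
    (hSwm : 0 < Swm N r w) :
    Filter.Tendsto
      (fun α : ℝ =>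
        -Real.log ((1 / (N : ℝ)) * ∑ i, w i * Real.exp (-r i / α)) -
          (∑ i, w i * (r i / α) * Real.exp (-r i / α)) /
            (∑ i, w i * Real.exp (-r i / α)))
      (nhdsWithin 0 (Set.Ioi 0)) (nhds (-Real.log (Swm N r w))) := by
  classical
  haveI : Nonempty (Fin N) := ⟨⟨0, hN⟩⟩
  have hN' : (0 : ℝ) < N := Nat.cast_pos.mpr hN
  set m := mMin N r with hm
  have hmle : ∀ i, m ≤ r i := fun i => ciInf_le (Set.Finite.bddBelow (Set.finite_range r)) i
  set s := Finset.univ.filter (fun i => r i = m) with hs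
  set SmSum : ℝ := ∑ i ∈ s, w i with hSmdef
  have hSwmEq : Swm N r w = (1 / (N : ℝ)) * SmSum := rfl
  have hSmpos : 0 < SmSum := by
    have h1 : SmSum = (N : ℝ) * Swm N r w := by
      rw [hSwmEq]; field_simp
    rw [h1]; exact mul_pos hN' hSwm
  set A : ℝ → ℝ := fun α => ∑ i, w i * Real.exp (-(r i - m) / α) with hA
  set B : ℝ → ℝ := fun α => ∑ i, w i * ((r i - m) / α) * Real.exp (-(r i - m) / α) with hB
  -- pointwise lower bound on A
  have hAge : ∀ α : ℝ, SmSum ≤ A α := by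
    intro α
    have h1 : SmSum = ∑ i ∈ s, w i * Real.exp (-(r i - m) / α) := by
      apply Finset.sum_congr rfl
      intro i hi
      have : r i = m := by
        simp only [hs, Finset.mem_filter] at hi; exact hi.2
      simp [this]
    rw [h1, hA]
    exact Finset.sum_le_sum_of_subset_of_nonneg (Finset.subset_univ s)
      (fun i _ _ => mul_nonneg (hw i) (Real.exp_pos _).le)
  have hApos : ∀ α : ℝ, 0 < A α := fun α => lt_of_lt_of_le hSmpos (hAge α)
  -- limit of A
  have hAtend : Filter.Tendsto A (nhdsWithin 0 (Set.Ioi 0)) (nhds SmSum) := by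
    have hSmeq : SmSum = ∑ i, if r i = m then w i else 0 := by
      rw [hSmdef, hs, Finset.sum_filter]
    rw [hSmeq, hA]
    apply tendsto_finset_sum
    intro i _
    by_cases h : r i = m
    · simp only [h, if_pos, sub_self, neg_zero, zero_div, Real.exp_zero, mul_one]
      exact tendsto_const_nhds
    · simp only [h, if_neg, not_false_iff]
      have hc : 0 < r i - m := sub_pos.mpr (lt_of_le_of_ne (hmle i) (Ne.symm h))
      have h1 : Filter.Tendsto (fun α : ℝ => (r i - m) * α⁻¹)
          (nhdsWithin 0 (Set.Ioi 0)) Filter.atTop :=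
        tendsto_inv_nhdsGT_zero.const_mul_atTop hc
      have h2 : Filter.Tendsto (fun α : ℝ => Real.exp (-((r i - m) * α⁻¹)))
          (nhdsWithin 0 (Set.Ioi 0)) (nhds 0) :=
        Real.tendsto_exp_neg_atTop_nhds_zero.comp h1
      have h3 := h2.const_mul (w i)
      rw [mul_zero] at h3
      refine h3.congr (fun α => ?_)
      rw [neg_div, div_eq_mul_inv]
  -- limit of B
  have hBtend : Filter.Tendsto B (nhdsWithin 0 (Set.Ioi 0)) (nhds 0) := by
    have key : Filter.Tendsto (fun α : ℝ => ∑ i, w i * ((r i - m) / α) * Real.exp (-(r i - m) / α))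
        (nhdsWithin 0 (Set.Ioi 0)) (nhds (∑ _i : Fin N, (0 : ℝ))) := by
      apply tendsto_finset_sum
      intro i _
      by_cases h : r i = m
      · have heq : (fun α : ℝ => w i * ((r i - m) / α) * Real.exp (-(r i - m) / α))
            = fun _ => (0 : ℝ) := by
          funext α; rw [h]; simp
        rw [heq]; exact tendsto_const_nhds
      · have hc : 0 < r i - m := sub_pos.mpr (lt_of_le_of_ne (hmle i) (Ne.symm h))
        have h1 : Filter.Tendsto (fun α : ℝ => (r i - m) * α⁻¹)
            (nhdsWithin 0 (Set.Ioi 0)) Filter.atTop :=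
          tendsto_inv_nhdsGT_zero.const_mul_atTop hc
        have hg : Filter.Tendsto (fun x : ℝ => x * Real.exp (-x)) Filter.atTop (nhds 0) := by
          have := Real.tendsto_pow_mul_exp_neg_atTop_nhds_zero 1
          simpa using this
        have h2 : Filter.Tendsto
            (fun α : ℝ => ((r i - m) * α⁻¹) * Real.exp (-((r i - m) * α⁻¹)))
            (nhdsWithin 0 (Set.Ioi 0)) (nhds 0) := hg.comp h1
        have h3 := h2.const_mul (w i)
        rw [mul_zero] at h3
        refine h3.congr (fun α => ?_)
        rw [neg_div, div_eq_mul_inv]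
        ring
    rw [hB]
    simpa using key
  -- limit of the transformed expression
  have hG : Filter.Tendsto (fun α : ℝ => -Real.log ((1 / (N : ℝ)) * A α) - B α / A α)
      (nhdsWithin 0 (Set.Ioi 0)) (nhds (-Real.log (Swm N r w))) := by
    have hlimne : (1 / (N : ℝ)) * SmSum ≠ 0 := by positivity
    have hlog : Filter.Tendsto (fun α : ℝ => Real.log ((1 / (N : ℝ)) * A α))
        (nhdsWithin 0 (Set.Ioi 0)) (nhds (Real.log ((1 / (N : ℝ)) * SmSum))) :=
      (tendsto_const_nhds.mul hAtend).log hlimne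
    have hdiv : Filter.Tendsto (fun α : ℝ => B α / A α)
        (nhdsWithin 0 (Set.Ioi 0)) (nhds (0 / SmSum)) :=
      hBtend.div hAtend (ne_of_gt hSmpos)
    have := hlog.neg.sub hdiv
    rw [zero_div, sub_zero, ← hSwmEq] at this
    exact this
  -- the two functions agree on Ioi 0
  refine Filter.Tendsto.congr' ?_ hG
  filter_upwards [self_mem_nhdsWithin] with α hα
  have hα0 : (0 : ℝ) < α := hα
  have hαne : α ≠ 0 := ne_of_gt hα0
  have hexpne : Real.exp (-m / α) ≠ 0 := (Real.exp_pos _).ne'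
  have hAne : A α ≠ 0 := ne_of_gt (hApos α)
  have hsum1 : ∑ i, w i * Real.exp (-r i / α) = Real.exp (-m / α) * A α := by
    rw [hA, Finset.mul_sum]
    apply Finset.sum_congr rfl
    intro i _
    rw [mul_left_comm, ← Real.exp_add]
    congr 1
    field_simp
    ring
  have hsum2 : ∑ i, w i * (r i / α) * Real.exp (-r i / α)
      = Real.exp (-m / α) * (B α + (m / α) * A α) := by
    rw [hB, hA, mul_add, Finset.mul_sum, Finset.mul_sum, Finset.mul_sum,
      ← Finset.sum_add_distrib]
    apply Finset.sum_congr rfl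
    intro i _
    have hexp : Real.exp (-r i / α) = Real.exp (-m / α) * Real.exp (-(r i - m) / α) := by
      rw [← Real.exp_add]; congr 1; field_simp; ring
    rw [hexp]
    ring
  rw [hsum1, hsum2]
  have hlogeq : Real.log ((1 / (N : ℝ)) * (Real.exp (-m / α) * A α))
      = -m / α + Real.log ((1 / (N : ℝ)) * A α) := by
    rw [mul_left_comm, Real.log_mul hexpne (by positivity), Real.log_exp]
  rw [hlogeq]
  have hdiveq : Real.exp (-m / α) * (B α + m / α * A α) / (Real.exp (-m / α) * A α)
      = B α / A α + m / α := by
    rw [mul_div_mul_left _ _ hexpne, add_div, mul_div_assoc, div_self hAne, mul_one]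
  rw [hdiveq]
  ring
end

section
/- The function φ̂ is concave on (0, ∞). Moreover, if there exist indices i, j with w_i > 0, w_j > 0, and r_i ≠ r_j, then φ̂ is strictly concave on (0, ∞). -/
set_option maxHeartbeats 1000000


open Finset




lemma amgm_lt {x y p q : ℝ} (hx : 0 ≤ x) (hy : 0 ≤ y) (hp : 0 < p) (hq : 0 < q)
    (hpq : p + q = 1) (hxy : x ≠ y) : x ^ p * y ^ q < p * x + q * y := by
  rcases eq_or_lt_of_le hx with h | hx'
  · have hy' : 0 < y := lt_of_le_of_ne hy (by rintro rfl; exact hxy h.symm)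
    rw [← h, Real.zero_rpow hp.ne', zero_mul, mul_zero, zero_add]
    positivity
  rcases eq_or_lt_of_le hy with h | hy'
  · have : (0:ℝ) < x := hx'
    rw [← h, Real.zero_rpow hq.ne', mul_zero, mul_zero, add_zero]
    positivity
  · have hlog : Real.log x ≠ Real.log y := fun h =>
      hxy (Real.log_injOn_pos (Set.mem_Ioi.2 hx') (Set.mem_Ioi.2 hy') h)
    have := strictConvexOn_exp.2 (Set.mem_univ (Real.log x)) (Set.mem_univ (Real.log y))
      hlog hp hq hpq
    have hxp : Real.exp (p * Real.log x) = x ^ p := by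
      rw [Real.rpow_def_of_pos hx', mul_comm]
    have hyp : Real.exp (q * Real.log y) = y ^ q := by
      rw [Real.rpow_def_of_pos hy', mul_comm]
    simp only [smul_eq_mul, Real.exp_add, Real.exp_log hx', Real.exp_log hy'] at this
    rwa [hxp, hyp] at this

lemma holder_aux {N : ℕ} (f g : Fin N → ℝ) (hf : ∀ i, 0 ≤ f i) (hg : ∀ i, 0 ≤ g i)
    {p q : ℝ} (hp : 0 < p) (hq : 0 < q) (hpq : p + q = 1)
    (hU : 0 < ∑ i, f i) (hV : 0 < ∑ i, g i) :
    (∑ i, (f i) ^ p * (g i) ^ q ≤ (∑ i, f i) ^ p * (∑ i, g i) ^ q) ∧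
      ((∃ i, f i * (∑ j, g j) ≠ g i * (∑ j, f j)) →
        ∑ i, (f i) ^ p * (g i) ^ q < (∑ i, f i) ^ p * (∑ i, g i) ^ q) := by
  set U := ∑ i, f i with hUdef
  set V := ∑ i, g i with hVdef
  have hterm : ∀ i, (f i / U) ^ p * (g i / V) ^ q ≤ p * (f i / U) + q * (g i / V) := fun i =>
    Real.geom_mean_le_arith_mean2_weighted hp.le hq.le (div_nonneg (hf i) hU.le)
      (div_nonneg (hg i) hV.le) hpq
  have hsum : ∑ i, (p * (f i / U) + q * (g i / V)) = 1 := by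
    rw [Finset.sum_add_distrib, ← Finset.mul_sum, ← Finset.mul_sum, ← Finset.sum_div,
      ← Finset.sum_div, ← hUdef, ← hVdef, div_self hU.ne', div_self hV.ne',
      mul_one, mul_one, hpq]
  have hconv : ∀ i, (f i) ^ p * (g i) ^ q = U ^ p * V ^ q * ((f i / U) ^ p * (g i / V) ^ q) := by
    intro i
    rw [Real.div_rpow (hf i) hU.le, Real.div_rpow (hg i) hV.le]
    field_simp [(Real.rpow_pos_of_pos hU p).ne', (Real.rpow_pos_of_pos hV q).ne']
  have hUVpos : 0 < U ^ p * V ^ q :=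
    mul_pos (Real.rpow_pos_of_pos hU p) (Real.rpow_pos_of_pos hV q)
  constructor
  · calc ∑ i, (f i) ^ p * (g i) ^ q
        = U ^ p * V ^ q * ∑ i, (f i / U) ^ p * (g i / V) ^ q := by
          rw [Finset.mul_sum]; exact Finset.sum_congr rfl fun i _ => hconv i
      _ ≤ U ^ p * V ^ q * ∑ i, (p * (f i / U) + q * (g i / V)) := by
          apply mul_le_mul_of_nonneg_left _ hUVpos.le
          exact Finset.sum_le_sum fun i _ => hterm i
      _ = U ^ p * V ^ q := by rw [hsum, mul_one]
  · rintro ⟨i0, hi0⟩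
    have hi0' : f i0 / U ≠ g i0 / V := by
      intro h
      rw [div_eq_div_iff hU.ne' hV.ne'] at h
      exact hi0 h
    have hstrict : (f i0 / U) ^ p * (g i0 / V) ^ q < p * (f i0 / U) + q * (g i0 / V) :=
      amgm_lt (div_nonneg (hf i0) hU.le) (div_nonneg (hg i0) hV.le) hp hq hpq hi0'
    calc ∑ i, (f i) ^ p * (g i) ^ q
        = U ^ p * V ^ q * ∑ i, (f i / U) ^ p * (g i / V) ^ q := by
          rw [Finset.mul_sum]; exact Finset.sum_congr rfl fun i _ => hconv i
      _ < U ^ p * V ^ q * ∑ i, (p * (f i / U) + q * (g i / V)) := by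
          apply mul_lt_mul_of_pos_left _ hUVpos
          exact Finset.sum_lt_sum (fun i _ => hterm i) ⟨i0, Finset.mem_univ i0, hstrict⟩
      _ = U ^ p * V ^ q := by rw [hsum, mul_one]

lemma phiHat_key (N : ℕ) (hN : 0 < N) (r w : Fin N → ℝ) (hw : ∀ i, 0 ≤ w i) (δ : ℝ)
    (hex : ∃ i, 0 < w i) (α β : ℝ) (hα : 0 < α) (hβ : 0 < β)
    (a b : ℝ) (ha : 0 < a) (hb : 0 < b) (hab : a + b = 1) :
    (a * phiHat N r w δ α + b * phiHat N r w δ β ≤ phiHat N r w δ (a * α + b * β)) ∧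
      ((α ≠ β ∧ ∃ i j, 0 < w i ∧ 0 < w j ∧ r i ≠ r j) →
        a * phiHat N r w δ α + b * phiHat N r w δ β < phiHat N r w δ (a * α + b * β)) := by
  have hNR : (0 : ℝ) < (N : ℝ) := Nat.cast_pos.2 hN
  set γ : ℝ := a * α + b * β with hγdef
  have hγ : 0 < γ := by positivity
  set p : ℝ := a * α / γ with hpdef
  set q : ℝ := b * β / γ with hqdef
  have hp : 0 < p := by positivity
  have hq : 0 < q := by positivity
  have hpq : p + q = 1 := by
    rw [hpdef, hqdef, ← add_div, ← hγdef, div_self hγ.ne']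
  set f : Fin N → ℝ := fun i => w i * Real.exp (-r i / α) with hfdef
  set g : Fin N → ℝ := fun i => w i * Real.exp (-r i / β) with hgdef
  have hfnn : ∀ i, 0 ≤ f i := fun i => mul_nonneg (hw i) (Real.exp_pos _).le
  have hgnn : ∀ i, 0 ≤ g i := fun i => mul_nonneg (hw i) (Real.exp_pos _).le
  obtain ⟨i0, hi0⟩ := hex
  have hU : 0 < ∑ i, f i :=
    Finset.sum_pos' (fun i _ => hfnn i)
      ⟨i0, Finset.mem_univ i0, mul_pos hi0 (Real.exp_pos _)⟩
  have hV : 0 < ∑ i, g i :=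
    Finset.sum_pos' (fun i _ => hgnn i)
      ⟨i0, Finset.mem_univ i0, mul_pos hi0 (Real.exp_pos _)⟩
  have hexpo : ∀ x : ℝ, -x / α * p + -x / β * q = -x / γ := by
    intro x
    have e1 : -x / α * p = -x * a / γ := by
      rw [hpdef]; field_simp [hα.ne', hγ.ne']
    have e2 : -x / β * q = -x * b / γ := by
      rw [hqdef]; field_simp [hβ.ne', hγ.ne']
    rw [e1, e2, ← add_div, show -x * a + -x * b = -x * (a + b) by ring, hab, mul_one]
  have hfg : ∀ i, (f i) ^ p * (g i) ^ q = w i * Real.exp (-r i / γ) := by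
    intro i
    rw [hfdef, hgdef]
    simp only
    rw [Real.mul_rpow (hw i) (Real.exp_pos _).le, Real.mul_rpow (hw i) (Real.exp_pos _).le,
      ← Real.exp_log (Real.exp_pos (-r i / α)), ← Real.exp_log (Real.exp_pos (-r i / β))]
    simp only [Real.log_exp]
    rw [← Real.exp_mul, ← Real.exp_mul]
    calc w i ^ p * Real.exp (-r i / α * p) * (w i ^ q * Real.exp (-r i / β * q))
        = (w i ^ p * w i ^ q) * (Real.exp (-r i / α * p) * Real.exp (-r i / β * q)) := by ring
      _ = w i * Real.exp (-r i / γ) := by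
          rw [← Real.exp_add, hexpo, ← Real.rpow_add' (hw i) (by rw [hpq]; norm_num), hpq,
            Real.rpow_one]
  have hS : ∀ x : ℝ, 0 < x → 0 < (1 / (N : ℝ)) * ∑ i, w i * Real.exp (-r i / x) := by
    intro x hx
    have : 0 < ∑ i, w i * Real.exp (-r i / x) :=
      Finset.sum_pos' (fun i _ => mul_nonneg (hw i) (Real.exp_pos _).le)
        ⟨i0, Finset.mem_univ i0, mul_pos hi0 (Real.exp_pos _)⟩
    positivity
  have hSα := hS α hα
  have hSβ := hS β hβ
  have hSγ := hS γ hγ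
  -- from Hölder sums to S-inequality
  have hconv : ∀ (h : ∑ i, (f i) ^ p * (g i) ^ q ≤ (∑ i, f i) ^ p * (∑ i, g i) ^ q),
      (1 / (N : ℝ)) * ∑ i, w i * Real.exp (-r i / γ) ≤
        ((1 / (N : ℝ)) * ∑ i, f i) ^ p * ((1 / (N : ℝ)) * ∑ i, g i) ^ q := by
    intro h
    have h1 : (1 / (N : ℝ)) * ∑ i, w i * Real.exp (-r i / γ) =
        (1 / (N : ℝ)) * ∑ i, (f i) ^ p * (g i) ^ q := by
      congr 1
      exact (Finset.sum_congr rfl fun i _ => (hfg i)).symm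
    have h2 : ((1 / (N : ℝ)) * ∑ i, f i) ^ p * ((1 / (N : ℝ)) * ∑ i, g i) ^ q =
        (1 / (N : ℝ)) * ((∑ i, f i) ^ p * (∑ i, g i) ^ q) := by
      rw [Real.mul_rpow (by positivity) hU.le, Real.mul_rpow (by positivity) hV.le]
      have : (1 / (N : ℝ)) ^ p * (1 / (N : ℝ)) ^ q = 1 / (N : ℝ) := by
        rw [← Real.rpow_add (by positivity), hpq, Real.rpow_one]
      calc (1 / (N : ℝ)) ^ p * (∑ i, f i) ^ p * ((1 / (N : ℝ)) ^ q * (∑ i, g i) ^ q)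
          = ((1 / (N : ℝ)) ^ p * (1 / (N : ℝ)) ^ q) * ((∑ i, f i) ^ p * (∑ i, g i) ^ q) := by
            ring
        _ = (1 / (N : ℝ)) * ((∑ i, f i) ^ p * (∑ i, g i) ^ q) := by rw [this]
    rw [h1, h2]
    exact mul_le_mul_of_nonneg_left h (by positivity)
  have hconv' : ∀ (h : ∑ i, (f i) ^ p * (g i) ^ q < (∑ i, f i) ^ p * (∑ i, g i) ^ q),
      (1 / (N : ℝ)) * ∑ i, w i * Real.exp (-r i / γ) <
        ((1 / (N : ℝ)) * ∑ i, f i) ^ p * ((1 / (N : ℝ)) * ∑ i, g i) ^ q := by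
    intro h
    have h1 : (1 / (N : ℝ)) * ∑ i, w i * Real.exp (-r i / γ) =
        (1 / (N : ℝ)) * ∑ i, (f i) ^ p * (g i) ^ q := by
      congr 1
      exact (Finset.sum_congr rfl fun i _ => (hfg i)).symm
    have h2 : ((1 / (N : ℝ)) * ∑ i, f i) ^ p * ((1 / (N : ℝ)) * ∑ i, g i) ^ q =
        (1 / (N : ℝ)) * ((∑ i, f i) ^ p * (∑ i, g i) ^ q) := by
      rw [Real.mul_rpow (by positivity) hU.le, Real.mul_rpow (by positivity) hV.le]
      have : (1 / (N : ℝ)) ^ p * (1 / (N : ℝ)) ^ q = 1 / (N : ℝ) := by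
        rw [← Real.rpow_add (by positivity), hpq, Real.rpow_one]
      calc (1 / (N : ℝ)) ^ p * (∑ i, f i) ^ p * ((1 / (N : ℝ)) ^ q * (∑ i, g i) ^ q)
          = ((1 / (N : ℝ)) ^ p * (1 / (N : ℝ)) ^ q) * ((∑ i, f i) ^ p * (∑ i, g i) ^ q) := by
            ring
        _ = (1 / (N : ℝ)) * ((∑ i, f i) ^ p * (∑ i, g i) ^ q) := by rw [this]
    rw [h1, h2]
    exact mul_lt_mul_of_pos_left h (by positivity)
  obtain ⟨hhol_le, hhol_lt⟩ := holder_aux f g hfnn hgnn hp hq hpq hU hV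
  set Sa : ℝ := (1 / (N : ℝ)) * ∑ i, w i * Real.exp (-r i / α) with hSadef
  set Sb : ℝ := (1 / (N : ℝ)) * ∑ i, w i * Real.exp (-r i / β) with hSbdef
  set Sg : ℝ := (1 / (N : ℝ)) * ∑ i, w i * Real.exp (-r i / γ) with hSgdef
  have hSaf : Sa = (1 / (N : ℝ)) * ∑ i, f i := rfl
  have hSbg : Sb = (1 / (N : ℝ)) * ∑ i, g i := rfl
  have hlogmul : Real.log (Sa ^ p * Sb ^ q) = p * Real.log Sa + q * Real.log Sb := by
    rw [Real.log_mul (Real.rpow_pos_of_pos hSα p).ne' (Real.rpow_pos_of_pos hSβ q).ne',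
      Real.log_rpow hSα, Real.log_rpow hSβ]
  have hγp : γ * p = a * α := by rw [hpdef]; field_simp
  have hγq : γ * q = b * β := by rw [hqdef]; field_simp
  have hexpand : γ * (p * Real.log Sa + q * Real.log Sb)
      = a * α * Real.log Sa + b * β * Real.log Sb := by
    rw [← hγp, ← hγq]; ring
  -- the final arithmetic, from a log comparison
  have hfinal : ∀ (L : ℝ), Real.log Sg ≤ L →
      γ * Real.log Sg ≤ γ * L := fun L hL => mul_le_mul_of_nonneg_left hL hγ.le
  have hγδ : γ * δ = a * α * δ + b * β * δ := by rw [hγdef]; ring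
  constructor
  · have hSle := hconv hhol_le
    have hlog : Real.log Sg ≤ p * Real.log Sa + q * Real.log Sb := by
      rw [← hlogmul]
      exact Real.log_le_log hSγ hSle
    have hkey : γ * Real.log Sg ≤ a * α * Real.log Sa + b * β * Real.log Sb := by
      have := hfinal _ hlog
      rw [hexpand] at this
      exact this
    simp only [phiHat, ← hSadef, ← hSbdef, ← hSgdef]
    nlinarith [hkey, hγδ]
  · rintro ⟨hαβ, i, j, hwi, hwj, hrij⟩
    have hwitness : ∃ i, f i * (∑ j, g j) ≠ g i * (∑ j, f j) := by
      by_contra hc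
      push_neg at hc
      have hi := hc i
      have hj := hc j
      simp only [hfdef, hgdef] at hi hj
      have Ei : Real.exp (-r i / α) * (∑ k, g k) = Real.exp (-r i / β) * (∑ k, f k) := by
        have := hi
        have h' : w i * (Real.exp (-r i / α) * (∑ k, g k)) =
            w i * (Real.exp (-r i / β) * (∑ k, f k)) := by linear_combination this
        exact mul_left_cancel₀ hwi.ne' h'
      have Ej : Real.exp (-r j / α) * (∑ k, g k) = Real.exp (-r j / β) * (∑ k, f k) := by
        have := hj
        have h' : w j * (Real.exp (-r j / α) * (∑ k, g k)) =
            w j * (Real.exp (-r j / β) * (∑ k, f k)) := by linear_combination this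
        exact mul_left_cancel₀ hwj.ne' h'
      have key : Real.exp (-r i / α) * Real.exp (-r j / β)
          = Real.exp (-r j / α) * Real.exp (-r i / β) := by
        have hVne : (∑ k, g k) ≠ 0 := hV.ne'
        apply mul_right_cancel₀ hVne
        linear_combination Real.exp (-r j / β) * Ei - Real.exp (-r i / β) * Ej
      rw [← Real.exp_add, ← Real.exp_add] at key
      have key2 : -r i / α + -r j / β = -r j / α + -r i / β := Real.exp_eq_exp.mp key
      have key3 : (r i - r j) * (β - α) = 0 := by
        field_simp at key2
        linear_combination -key2
      rcases mul_eq_zero.mp key3 with h | h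
      · exact hrij (by linarith)
      · exact hαβ (by linarith)
    have hSlt := hconv' (hhol_lt hwitness)
    have hlog : Real.log Sg < p * Real.log Sa + q * Real.log Sb := by
      rw [← hlogmul]
      exact Real.log_lt_log hSγ hSlt
    have hkey : γ * Real.log Sg < a * α * Real.log Sa + b * β * Real.log Sb := by
      have := mul_lt_mul_of_pos_left hlog hγ
      rw [hexpand] at this
      exact this
    simp only [phiHat, ← hSadef, ← hSbdef, ← hSgdef]
    nlinarith [hkey, hγδ]

/-- `φ̂` is concave on `(0, ∞)`, and strictly concave if there are two positive-weight
indices with distinct rewards. -/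
theorem phiHat_concaveOn_and_strictConcaveOn
    (N : ℕ) (hN : 0 < N) (r w : Fin N → ℝ)
    (hr : ∀ i, r i ∈ Set.Icc (0 : ℝ) 1) (hw : ∀ i, 0 ≤ w i)
    (δ : ℝ) (hδ : 0 < δ) (hSwpos : 0 < Sw N w) :
    ConcaveOn ℝ (Set.Ioi (0 : ℝ)) (phiHat N r w δ) ∧
      ((∃ i j : Fin N, 0 < w i ∧ 0 < w j ∧ r i ≠ r j) →
        StrictConcaveOn ℝ (Set.Ioi (0 : ℝ)) (phiHat N r w δ)) := by
  have hsum : 0 < ∑ i, w i := by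
    have h1 := hSwpos
    rw [Sw] at h1
    have hNR : (0 : ℝ) < (N : ℝ) := Nat.cast_pos.2 hN
    by_contra h
    push_neg at h
    have h2 : (0:ℝ) < 1 / (N:ℝ) := by positivity
    nlinarith [mul_nonneg h2.le (neg_nonneg.2 h)]
  have hex : ∃ i, 0 < w i := by
    by_contra h
    push_neg at h
    have : ∑ i, w i ≤ 0 := Finset.sum_nonpos fun i _ => h i
    linarith
  constructor
  · refine ⟨convex_Ioi 0, fun x hx y hy a b ha hb hab => ?_⟩
    rcases eq_or_lt_of_le ha with ha0 | ha'
    · have hb1 : b = 1 := by linarith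
      simp [← ha0, hb1]
    rcases eq_or_lt_of_le hb with hb0 | hb'
    · have ha1 : a = 1 := by linarith
      simp [← hb0, ha1]
    · simpa [smul_eq_mul] using
        (phiHat_key N hN r w hw δ hex x y hx hy a b ha' hb' hab).1
  · intro hij
    refine ⟨convex_Ioi 0, fun x hx y hy hxy a b ha hb hab => ?_⟩
    simpa [smul_eq_mul] using
      (phiHat_key N hN r w hw δ hex x y hx hy a b ha hb hab).2 ⟨hxy, hij⟩
end
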